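/- For every integer d ≥ 1 and every x ∈ ℝ^d, the gradient of the chain function satisfies ‖∇H_d(x)‖_∞ ≤ 23, where ‖·‖_∞ denotes the supremum norm on ℝ^d. -/

import Mathlib

/-- `Ψ(t) = 0` for `t ≤ 1/2` and `Ψ(t) = exp(1 − 1/(2t−1)²)` for `t > 1/2`. -/
noncomputable def Psi (t : ℝ) : ℝ :=
  if t ≤ 1 / 2 then 0 else Real.exp (1 - 1 / (2 * t - 1) ^ 2)

/-- `Φ(t) = √e ∫_{−∞}^{t} exp(−τ²/2) dτ`. -/
noncomputable def Phi (t : ℝ) : ℝ :=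
  Real.sqrt (Real.exp 1) * ∫ τ in Set.Iic t, Real.exp (-τ ^ 2 / 2)

/-- The `i`-th coordinate (1-based, `1 ≤ i ≤ d`) of a vector in `ℝ^d`;
zero when out of range. -/
noncomputable def coord (d : ℕ) (y : EuclideanSpace ℝ (Fin d)) (i : ℕ) : ℝ :=
  if h : i - 1 < d then y ⟨i - 1, h⟩ else 0

/-- The chain function
`H_d(x) = −Ψ(1)Φ(x₁) + ∑_{i=2}^d (Ψ(−x_{i−1})Φ(−x_i) − Ψ(x_{i−1})Φ(x_i))`. -/
noncomputable def Hchain (d : ℕ) (y : EuclideanSpace ℝ (Fin d)) : ℝ :=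
  -Psi 1 * Phi (coord d y 1) +
    ∑ i ∈ Finset.Icc 2 d,
      (Psi (-coord d y (i - 1)) * Phi (-coord d y i) -
        Psi (coord d y (i - 1)) * Phi (coord d y i))

noncomputable def psi' (t : ℝ) : ℝ :=
  if t ≤ 1 / 2 then 0 else Psi t * (4 / (2 * t - 1) ^ 3)

lemma Psi_nonneg (t : ℝ) : 0 ≤ Psi t := by
  unfold Psi; split
  · exact le_refl 0
  · positivity

lemma Psi_le (t : ℝ) : Psi t ≤ Real.exp 1 := by
  unfold Psi; split
  · positivity
  · apply Real.exp_le_exp.2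
    have : 0 ≤ 1 / (2*t-1)^2 := by positivity
    linarith

lemma Psi_quad (t : ℝ) : Psi t ≤ Real.exp 1 * (2*t-1)^2 := by
  unfold Psi; split
  · positivity
  · rename_i h
    push_neg at h
    have hu : (0:ℝ) < 2*t-1 := by linarith
    have h1 : (1:ℝ) / (2*t-1)^2 + 1 ≤ Real.exp (1/(2*t-1)^2) := Real.add_one_le_exp _
    have h2 : Real.exp (1 - 1/(2*t-1)^2) = Real.exp 1 / Real.exp (1/(2*t-1)^2) := by
      rw [← Real.exp_sub]
    rw [h2]
    rw [div_le_iff₀ (Real.exp_pos _)]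
    have h3 : Real.exp 1 * (2*t-1)^2 * (1/(2*t-1)^2) ≤ Real.exp 1 * (2*t-1)^2 * Real.exp (1/(2*t-1)^2) := by
      apply mul_le_mul_of_nonneg_left _ (by positivity)
      linarith
    calc Real.exp 1 = Real.exp 1 * (2*t-1)^2 * (1/(2*t-1)^2) := by field_simp
    _ ≤ _ := h3

lemma hasDerivAt_Psi (t : ℝ) : HasDerivAt Psi (psi' t) t := by
  rcases lt_trichotomy t (1/2) with h | h | h
  · have hev : Psi =ᶠ[nhds t] (fun _ => (0:ℝ)) := by
      filter_upwards [eventually_lt_nhds h] with s hs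
      unfold Psi; rw [if_pos hs.le]
    have : HasDerivAt (fun _ => (0:ℝ)) 0 t := hasDerivAt_const t 0
    have h0 : psi' t = 0 := by unfold psi'; rw [if_pos h.le]
    rw [h0]
    exact this.congr_of_eventuallyEq hev
  · -- t = 1/2 : use littleO
    subst h
    have h0 : psi' (1/2) = 0 := by unfold psi'; rw [if_pos le_rfl]
    rw [h0, hasDerivAt_iff_isLittleO]
    have hP0 : Psi (1/2 : ℝ) = 0 := by unfold Psi; rw [if_pos le_rfl]
    simp only [hP0, sub_zero, smul_zero]
    have h1 : (fun s : ℝ => Psi s) =O[nhds (1/2 : ℝ)] (fun s => (s - 1/2)^2) := by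
      rw [Asymptotics.isBigO_iff]
      refine ⟨4 * Real.exp 1, Filter.Eventually.of_forall fun s => ?_⟩
      rw [Real.norm_eq_abs, Real.norm_eq_abs, abs_of_nonneg (Psi_nonneg s)]
      have := Psi_quad s
      have h2 : (2*s-1)^2 = 4 * (s - 1/2)^2 := by ring
      rw [abs_of_nonneg (by positivity : (0:ℝ) ≤ (s-1/2)^2)]
      nlinarith [Real.exp_pos 1]
    have h2 : (fun s : ℝ => (s - 1/2)^2) =o[nhds (1/2 : ℝ)] (fun s => s - 1/2) := by
      have := Asymptotics.isLittleO_pow_id (𝕜 := ℝ) (n := 2) one_lt_two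
      have ht : Filter.Tendsto (fun s : ℝ => s - 1/2) (nhds (1/2 : ℝ)) (nhds 0) := by
        have := ((continuous_id (X := ℝ)).sub (continuous_const (y := (1/2:ℝ)))).tendsto (1/2:ℝ)
        simpa [Pi.sub_def] using this
      have h3 := this.comp_tendsto ht
      simpa [Function.comp_def] using h3
    exact h1.trans_isLittleO h2
  · -- t > 1/2
    have hu : (0:ℝ) < 2*t-1 := by linarith
    have hg : HasDerivAt (fun s : ℝ => 1 - 1/(2*s-1)^2) (4/(2*t-1)^3) t := by
      have hf : HasDerivAt (fun s : ℝ => (2*s-1)^2) (2 * (2*t-1) * 2) t := by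
        have : HasDerivAt (fun s : ℝ => 2*s-1) 2 t := by
          simpa using ((hasDerivAt_id t).const_mul (2:ℝ)).sub_const 1
        simpa using this.fun_pow 2
      have hinv := hf.inv (by positivity)
      have := hinv.const_sub 1
      have e : (fun s : ℝ => 1 - 1/(2*s-1)^2) = fun x => 1 - (fun s : ℝ => (2*s-1)^2)⁻¹ x := by
        funext s; rw [one_div]; rfl
      rw [e]
      refine this.congr_deriv ?_
      have := hu.ne'
      field_simp; ring
    have hexp := hg.exp
    have hev : Psi =ᶠ[nhds t] (fun s => Real.exp (1 - 1/(2*s-1)^2)) := by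
      filter_upwards [eventually_gt_nhds h] with s hs
      unfold Psi; rw [if_neg (by linarith)]
    have heq : psi' t = Real.exp (1 - 1/(2*t-1)^2) * (4/(2*t-1)^3) := by
      unfold psi' Psi; rw [if_neg (by linarith), if_neg (by linarith)]
    rw [heq]
    exact hexp.congr_of_eventuallyEq hev

lemma psi'_nonneg (t : ℝ) : 0 ≤ psi' t := by
  unfold psi'; split
  · exact le_rfl
  · rename_i h; push_neg at h
    have : (0:ℝ) < 2*t-1 := by linarith
    have := Psi_nonneg t
    positivity

lemma psi'_le (t : ℝ) : psi' t ≤ Real.sqrt (54 / Real.exp 1) := by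
  have hsq : (psi' t)^2 ≤ 54 / Real.exp 1 := by
    unfold psi' Psi
    split
    · simpa using (by positivity : (0:ℝ) ≤ 54 / Real.exp 1)
    · rename_i h; push_neg at h
      -- if resolved by split
      set u : ℝ := 2*t-1 with hu
      have hu0 : (0:ℝ) < u := by rw [hu]; linarith
      set s : ℝ := 1/u^2 with hs
      have hs0 : (0:ℝ) < s := by positivity
      have key : s ≤ 3/2 * Real.exp (2*s/3 - 1) := by
        have := Real.add_one_le_exp (2*s/3 - 1)
        linarith
      have key3 : s^3 ≤ 27/8 * Real.exp (2*s - 3) := by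
        have h1 : s^3 ≤ (3/2 * Real.exp (2*s/3-1))^3 :=
          pow_le_pow_left₀ hs0.le key 3
        have h2 : (3/2 * Real.exp (2*s/3-1))^3 = 27/8 * Real.exp (2*s - 3) := by
          rw [mul_pow, ← Real.exp_nat_mul]
          norm_num
          ring_nf
        rw [h2] at h1; exact h1
      have hexpand : (Real.exp (1 - 1/u^2) * (4/u^3))^2 = Real.exp (2 - 2*s) * (16 * s^3) := by
        have e2 : Real.exp (1 - 1/u^2) ^ 2 = Real.exp (2 - 2*s) := by
          rw [sq, ← Real.exp_add, hs]; ring_nf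
        have e3 : (4/u^3)^2 = 16 * s^3 := by rw [hs]; field_simp; ring
        rw [mul_pow, e2, e3]
      rw [hexpand]
      have hle : Real.exp (2-2*s) * (16 * s^3) ≤ Real.exp (2-2*s) * (16 * (27/8 * Real.exp (2*s-3))) := by
        apply mul_le_mul_of_nonneg_left _ (Real.exp_pos _).le
        nlinarith
      have heq : Real.exp (2-2*s) * (16 * (27/8 * Real.exp (2*s-3))) = 54 / Real.exp 1 := by
        have h4 : Real.exp (2-2*s) * Real.exp (2*s-3) = Real.exp (-1 : ℝ) := by
          rw [← Real.exp_add]; ring_nf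
        calc Real.exp (2-2*s) * (16 * (27/8 * Real.exp (2*s-3)))
            = 54 * (Real.exp (2-2*s) * Real.exp (2*s-3)) := by ring
          _ = 54 * Real.exp (-1 : ℝ) := by rw [h4]
          _ = 54 / Real.exp 1 := by rw [Real.exp_neg, div_eq_mul_inv]
      calc Real.exp (2-2*s) * (16*s^3) ≤ _ := hle
        _ = 54 / Real.exp 1 := heq
  have h1 : psi' t = Real.sqrt ((psi' t)^2) := (Real.sqrt_sq (psi'_nonneg t)).symm
  rw [h1]
  exact Real.sqrt_le_sqrt hsq

noncomputable def phi' (t : ℝ) : ℝ := Real.sqrt (Real.exp 1) * Real.exp (-t^2/2)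

lemma gauss_eq : (fun τ : ℝ => Real.exp (-τ^2/2)) = fun x : ℝ => Real.exp (-(1/2)*x^2) := by
  funext x; ring_nf

lemma gauss_integrable : MeasureTheory.Integrable (fun τ : ℝ => Real.exp (-τ^2/2)) := by
  rw [gauss_eq]
  exact integrable_exp_neg_mul_sq (by norm_num)

lemma gauss_cont : Continuous (fun τ : ℝ => Real.exp (-τ^2/2)) := by
  continuity

lemma hasDerivAt_Phi (t : ℝ) : HasDerivAt Phi (phi' t) t := by
  set g : ℝ → ℝ := fun τ => Real.exp (-τ^2/2) with hg
  have hint : MeasureTheory.Integrable g := gauss_integrable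
  have key : ∀ u : ℝ, ∫ τ in Set.Iic u, g τ = (∫ τ in Set.Iic (0:ℝ), g τ) + ∫ τ in (0:ℝ)..u, g τ := by
    intro u
    have := intervalIntegral.integral_Iic_sub_Iic (hint.integrableOn (s := Set.Iic 0))
      (hint.integrableOn (s := Set.Iic u))
    linarith
  have hD : HasDerivAt (fun u : ℝ => ∫ τ in (0:ℝ)..u, g τ) (g t) t :=
    intervalIntegral.integral_hasDerivAt_right (hint.intervalIntegrable)
      (gauss_cont.stronglyMeasurableAtFilter _ _) gauss_cont.continuousAt
  have hD2 : HasDerivAt (fun u : ℝ => (∫ τ in Set.Iic (0:ℝ), g τ) + ∫ τ in (0:ℝ)..u, g τ) (g t) t := by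
    simpa using (hD.const_add (∫ τ in Set.Iic (0:ℝ), g τ))
  have hD3 := hD2.const_mul (Real.sqrt (Real.exp 1))
  have hPhi : Phi = fun u => Real.sqrt (Real.exp 1) * ((∫ τ in Set.Iic (0:ℝ), g τ) + ∫ τ in (0:ℝ)..u, g τ) := by
    funext u; rw [Phi, ← key u]
  rw [hPhi]
  exact hD3

open Real in
lemma Phi_nonneg (t : ℝ) : 0 ≤ Phi t := by
  apply mul_nonneg (Real.sqrt_nonneg _)
  apply MeasureTheory.setIntegral_nonneg measurableSet_Iic
  intro τ _; exact (Real.exp_pos _).le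

lemma Phi_le (t : ℝ) : Phi t ≤ Real.sqrt (Real.exp 1) * Real.sqrt (2 * Real.pi) := by
  apply mul_le_mul_of_nonneg_left _ (Real.sqrt_nonneg _)
  have h1 : ∫ τ in Set.Iic t, Real.exp (-τ^2/2) ≤ ∫ τ : ℝ, Real.exp (-τ^2/2) :=
    MeasureTheory.setIntegral_le_integral gauss_integrable
      (Filter.Eventually.of_forall fun τ => (Real.exp_pos _).le)
  have h2 : ∫ τ : ℝ, Real.exp (-τ^2/2) = Real.sqrt (2 * Real.pi) := by
    rw [gauss_eq, integral_gaussian]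
    rw [show Real.pi / (1/2) = 2 * Real.pi by ring]
  linarith [h1, h2.symm.le]

lemma phi'_nonneg (t : ℝ) : 0 ≤ phi' t := by
  unfold phi'; positivity

lemma phi'_le (t : ℝ) : phi' t ≤ Real.sqrt (Real.exp 1) := by
  unfold phi'
  have : Real.exp (-t^2/2) ≤ 1 := Real.exp_le_one_iff.2 (by nlinarith [sq_nonneg t])
  nlinarith [Real.sqrt_nonneg (Real.exp 1)]

lemma numeric_bound :
    Real.sqrt (54 / Real.exp 1) * (Real.sqrt (Real.exp 1) * Real.sqrt (2 * Real.pi))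
      + Real.exp 1 * Real.sqrt (Real.exp 1) ≤ 23 := by
  have he1 : Real.exp 1 < 2.7182818286 := Real.exp_one_lt_d9
  have he0 : (1:ℝ) < Real.exp 1 := by
    have := Real.add_one_le_exp (1:ℝ); linarith
  have hse : Real.sqrt (Real.exp 1) ≤ 1.64873 := by
    rw [show (1.64873:ℝ) = Real.sqrt (1.64873^2) from (Real.sqrt_sq (by norm_num)).symm]
    apply Real.sqrt_le_sqrt; nlinarith
  have h54 : Real.sqrt (54/Real.exp 1) * Real.sqrt (Real.exp 1) = Real.sqrt 54 := by
    rw [← Real.sqrt_mul (by positivity)]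
    congr 1; field_simp
  have hprod : Real.sqrt 54 * Real.sqrt (2*Real.pi) = Real.sqrt (108 * Real.pi) := by
    rw [← Real.sqrt_mul (by norm_num)]; ring_nf
  have hpi : Real.pi < 3.141593 := Real.pi_lt_d6
  have h108 : Real.sqrt (108 * Real.pi) ≤ 18.42 := by
    rw [show (18.42:ℝ) = Real.sqrt (18.42^2) from (Real.sqrt_sq (by norm_num)).symm]
    apply Real.sqrt_le_sqrt; nlinarith
  have hB : Real.exp 1 * Real.sqrt (Real.exp 1) ≤ 4.482 := by
    nlinarith [Real.sqrt_nonneg (Real.exp 1)]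
  have hA : Real.sqrt (54 / Real.exp 1) * (Real.sqrt (Real.exp 1) * Real.sqrt (2 * Real.pi)) ≤ 18.42 := by
    rw [← mul_assoc, h54, hprod]; exact h108
  linarith


noncomputable def Cmap (d : ℕ) (i : ℕ) : EuclideanSpace ℝ (Fin d) →L[ℝ] ℝ :=
  if h : i - 1 < d then EuclideanSpace.proj (⟨i-1, h⟩ : Fin d) else 0

lemma coord_eq_Cmap (d : ℕ) (y : EuclideanSpace ℝ (Fin d)) (i : ℕ) :
    coord d y i = Cmap d i y := by
  unfold coord Cmap
  split
  · rw [PiLp.proj_apply]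
  · simp

lemma Cmap_single (d : ℕ) (m : ℕ) (j : Fin d) :
    Cmap d m (EuclideanSpace.single j 1) = if m - 1 = (j:ℕ) then 1 else 0 := by
  unfold Cmap
  split
  · rename_i h
    rw [PiLp.proj_apply, EuclideanSpace.single_apply]
    by_cases hc : m - 1 = (j:ℕ)
    · rw [if_pos hc, if_pos]
      exact Fin.ext hc
    · rw [if_neg hc, if_neg]
      intro hcon
      exact hc (congrArg Fin.val hcon)
  · rename_i h
    rw [ContinuousLinearMap.zero_apply, if_neg]
    intro hc
    exact h (hc ▸ j.isLt)

lemma hasF_Psi (d : ℕ) (i : ℕ) (x : EuclideanSpace ℝ (Fin d)) :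
    HasFDerivAt (fun y => Psi (Cmap d i y)) (psi' (Cmap d i x) • Cmap d i) x :=
  (hasDerivAt_Psi _).comp_hasFDerivAt x (Cmap d i).hasFDerivAt

lemma hasF_Psi_neg (d : ℕ) (i : ℕ) (x : EuclideanSpace ℝ (Fin d)) :
    HasFDerivAt (fun y => Psi (-(Cmap d i y))) (psi' (-(Cmap d i x)) • (-(Cmap d i))) x := by
  have h1 := (hasDerivAt_Psi ((-(Cmap d i)) x)).comp_hasFDerivAt x (-(Cmap d i)).hasFDerivAt
  simpa [Function.comp_def, ContinuousLinearMap.neg_apply] using h1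

lemma hasF_Phi (d : ℕ) (i : ℕ) (x : EuclideanSpace ℝ (Fin d)) :
    HasFDerivAt (fun y => Phi (Cmap d i y)) (phi' (Cmap d i x) • Cmap d i) x :=
  (hasDerivAt_Phi _).comp_hasFDerivAt x (Cmap d i).hasFDerivAt

lemma hasF_Phi_neg (d : ℕ) (i : ℕ) (x : EuclideanSpace ℝ (Fin d)) :
    HasFDerivAt (fun y => Phi (-(Cmap d i y))) (phi' (-(Cmap d i x)) • (-(Cmap d i))) x := by
  have h1 := (hasDerivAt_Phi ((-(Cmap d i)) x)).comp_hasFDerivAt x (-(Cmap d i)).hasFDerivAt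
  simpa [Function.comp_def, ContinuousLinearMap.neg_apply] using h1

/-- coefficient of `Cmap d (i-1)` in the derivative of the `i`-th chain term -/
noncomputable def ucoef (d : ℕ) (x : EuclideanSpace ℝ (Fin d)) (i : ℕ) : ℝ :=
  -(psi' (-(Cmap d (i-1) x)) * Phi (-(Cmap d i x))) - psi' (Cmap d (i-1) x) * Phi (Cmap d i x)

/-- coefficient of `Cmap d i` in the derivative of the `i`-th chain term -/
noncomputable def vcoef (d : ℕ) (x : EuclideanSpace ℝ (Fin d)) (i : ℕ) : ℝ :=
  -(Psi (-(Cmap d (i-1) x)) * phi' (-(Cmap d i x))) - Psi (Cmap d (i-1) x) * phi' (Cmap d i x)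

lemma hasF_term (d : ℕ) (i : ℕ) (x : EuclideanSpace ℝ (Fin d)) :
    HasFDerivAt
      (fun y => Psi (-(Cmap d (i-1) y)) * Phi (-(Cmap d i y))
        - Psi (Cmap d (i-1) y) * Phi (Cmap d i y))
      (ucoef d x i • Cmap d (i-1) + vcoef d x i • Cmap d i) x := by
  have h := ((hasF_Psi_neg d (i-1) x).mul (hasF_Phi_neg d i x)).sub
    ((hasF_Psi d (i-1) x).mul (hasF_Phi d i x))
  refine h.congr_fderiv ?_
  ext y
  simp only [ucoef, vcoef, ContinuousLinearMap.add_apply, ContinuousLinearMap.sub_apply,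
    ContinuousLinearMap.smul_apply, ContinuousLinearMap.neg_apply, smul_eq_mul]
  ring

lemma hasF_Hchain (d : ℕ) (x : EuclideanSpace ℝ (Fin d)) :
    HasFDerivAt (Hchain d)
      ((-Psi 1 * phi' (Cmap d 1 x)) • Cmap d 1 +
        ∑ i ∈ Finset.Icc 2 d, (ucoef d x i • Cmap d (i-1) + vcoef d x i • Cmap d i)) x := by
  have hre : Hchain d = fun y =>
      -Psi 1 * Phi (Cmap d 1 y) +
        ∑ i ∈ Finset.Icc 2 d,
          (Psi (-(Cmap d (i-1) y)) * Phi (-(Cmap d i y)) -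
            Psi (Cmap d (i-1) y) * Phi (Cmap d i y)) := by
    funext y
    unfold Hchain
    simp only [coord_eq_Cmap]
  rw [hre]
  have h1 : HasFDerivAt (fun y => -Psi 1 * Phi (Cmap d 1 y))
      ((-Psi 1) • (phi' (Cmap d 1 x) • Cmap d 1)) x :=
    (hasF_Phi d 1 x).const_mul (-Psi 1)
  have h2 := HasFDerivAt.fun_sum (fun i (_ : i ∈ Finset.Icc 2 d) => hasF_term d i x)
  have h3 := h1.add h2
  refine h3.congr_fderiv ?_
  rw [smul_smul]

lemma gradient_coord {d : ℕ} (f : EuclideanSpace ℝ (Fin d) → ℝ)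
    (L : EuclideanSpace ℝ (Fin d) →L[ℝ] ℝ) (x : EuclideanSpace ℝ (Fin d))
    (h : HasFDerivAt f L x) (j : Fin d) :
    gradient f x j = L (EuclideanSpace.single j 1) := by
  have h1 : gradient f x = (InnerProductSpace.toDual ℝ _).symm L := by
    rw [gradient, h.fderiv]
  have h3 : (inner ℝ (gradient f x) (EuclideanSpace.single j (1:ℝ)) : ℝ)
      = L (EuclideanSpace.single j 1) := by
    rw [h1]; exact InnerProductSpace.toDual_symm_apply
  rw [EuclideanSpace.inner_single_right] at h3
  simpa using h3

lemma grad_formula (d : ℕ) (x : EuclideanSpace ℝ (Fin d)) (j : Fin d) :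
    gradient (Hchain d) x j =
      -Psi 1 * phi' (Cmap d 1 x) * (if (0:ℕ) = (j:ℕ) then 1 else 0)
      + (if (j:ℕ)+2 ∈ Finset.Icc 2 d then ucoef d x ((j:ℕ)+2) else 0)
      + (if (j:ℕ)+1 ∈ Finset.Icc 2 d then vcoef d x ((j:ℕ)+1) else 0) := by
  rw [gradient_coord _ _ _ (hasF_Hchain d x) j]
  rw [ContinuousLinearMap.add_apply, ContinuousLinearMap.sum_apply]
  simp only [ContinuousLinearMap.add_apply, ContinuousLinearMap.smul_apply, smul_eq_mul,
    Cmap_single]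
  have hsum : ∑ i ∈ Finset.Icc 2 d,
      (ucoef d x i * (if i - 1 - 1 = (j:ℕ) then 1 else 0)
        + vcoef d x i * (if i - 1 = (j:ℕ) then 1 else 0))
      = ∑ i ∈ Finset.Icc 2 d,
      ((if i = (j:ℕ)+2 then ucoef d x i else 0) + (if i = (j:ℕ)+1 then vcoef d x i else 0)) := by
    apply Finset.sum_congr rfl
    intro i hi
    rw [Finset.mem_Icc] at hi
    have h1 : (i - 1 - 1 = (j:ℕ)) ↔ (i = (j:ℕ)+2) := by omega
    have h2 : (i - 1 = (j:ℕ)) ↔ (i = (j:ℕ)+1) := by omega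
    simp only [h1, h2, mul_ite, mul_one, mul_zero]
  rw [hsum, Finset.sum_add_distrib, Finset.sum_ite_eq' (Finset.Icc 2 d) ((j:ℕ)+2),
    Finset.sum_ite_eq' (Finset.Icc 2 d) ((j:ℕ)+1)]
  norm_num
  ring

lemma Psi_disj (b : ℝ) : Psi (-b) = 0 ∨ Psi b = 0 := by
  by_cases h : b ≤ 1/2
  · right; unfold Psi; rw [if_pos h]
  · left; unfold Psi; rw [if_pos (by push_neg at h; linarith)]

lemma psi'_disj (b : ℝ) : psi' (-b) = 0 ∨ psi' b = 0 := by
  by_cases h : b ≤ 1/2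
  · right; unfold psi'; rw [if_pos h]
  · left; unfold psi'; rw [if_pos (by push_neg at h; linarith)]

lemma vbound (b c1 c2 : ℝ) :
    |(-(Psi (-b) * phi' c1) - Psi b * phi' c2)| ≤ Real.exp 1 * Real.sqrt (Real.exp 1) := by
  have hb1 := Psi_nonneg b; have hb2 := Psi_nonneg (-b)
  have hc1 := phi'_nonneg c1; have hc2 := phi'_nonneg c2
  have hl1 := Psi_le b; have hl2 := Psi_le (-b)
  have hp1 := phi'_le c1; have hp2 := phi'_le c2
  have he := Real.exp_pos 1
  have hs := Real.sqrt_nonneg (Real.exp 1)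
  rcases Psi_disj b with h | h
  · rw [h]
    simp only [zero_mul, neg_zero, zero_sub, abs_neg]
    rw [abs_of_nonneg (mul_nonneg hb1 hc2)]
    nlinarith
  · rw [h]
    simp only [zero_mul, sub_zero, abs_neg]
    rw [abs_of_nonneg (mul_nonneg hb2 hc1)]
    nlinarith

lemma ubound (b c1 c2 : ℝ) :
    |(-(psi' (-b) * Phi c1) - psi' b * Phi c2)| ≤
      Real.sqrt (54 / Real.exp 1) * (Real.sqrt (Real.exp 1) * Real.sqrt (2 * Real.pi)) := by
  have hb1 := psi'_nonneg b; have hb2 := psi'_nonneg (-b)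
  have hc1 := Phi_nonneg c1; have hc2 := Phi_nonneg c2
  have hl1 := psi'_le b; have hl2 := psi'_le (-b)
  have hp1 := Phi_le c1; have hp2 := Phi_le c2
  have hs1 := Real.sqrt_nonneg (54 / Real.exp 1)
  have hs2 := Real.sqrt_nonneg (Real.exp 1)
  have hs3 := Real.sqrt_nonneg (2 * Real.pi)
  rcases psi'_disj b with h | h
  · rw [h]
    simp only [zero_mul, neg_zero, zero_sub, abs_neg]
    rw [abs_of_nonneg (mul_nonneg hb1 hc2)]
    nlinarith
  · rw [h]
    simp only [zero_mul, sub_zero, abs_neg]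
    rw [abs_of_nonneg (mul_nonneg hb2 hc1)]
    nlinarith

open Classical in
/-- The progress index `prog_a(x) = max({i ∈ {1,…,d} : |x_i| > a} ∪ {0})`. -/
noncomputable def prog (d : ℕ) (a : ℝ) (y : EuclideanSpace ℝ (Fin d)) : ℕ :=
  ((Finset.Icc 1 d).filter fun i => a < |coord d y i|).sup id

/-- The gradient of `H_d` is bounded by `23` in the supremum norm:
every coordinate of `∇H_d(x)` has absolute value at most `23`. -/
theorem chain_gradient_sup_norm_bound (d : ℕ) (hd : 1 ≤ d)
    (x : EuclideanSpace ℝ (Fin d)) :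
    ∀ i : Fin d, |gradient (Hchain d) x i| ≤ 23 := by
  intro j
  rw [grad_formula d x j]
  set A := -Psi 1 * phi' (Cmap d 1 x) * (if (0:ℕ) = (j:ℕ) then 1 else 0) with hA
  set U := (if (j:ℕ)+2 ∈ Finset.Icc 2 d then ucoef d x ((j:ℕ)+2) else 0) with hU
  set V := (if (j:ℕ)+1 ∈ Finset.Icc 2 d then vcoef d x ((j:ℕ)+1) else 0) with hV
  have hS1 : (0:ℝ) ≤ Real.sqrt (54 / Real.exp 1) * (Real.sqrt (Real.exp 1) * Real.sqrt (2 * Real.pi)) := by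
    positivity
  have hS2 : (0:ℝ) ≤ Real.exp 1 * Real.sqrt (Real.exp 1) := by positivity
  have hUb : |U| ≤ Real.sqrt (54 / Real.exp 1) * (Real.sqrt (Real.exp 1) * Real.sqrt (2 * Real.pi)) := by
    rw [hU]
    split
    · exact ubound _ _ _
    · simpa using hS1
  have hPsineg : Psi (-1 : ℝ) = 0 := by unfold Psi; rw [if_pos (by norm_num)]
  have hAVb : |A| + |V| ≤ Real.exp 1 * Real.sqrt (Real.exp 1) := by
    by_cases hj : (0:ℕ) = (j:ℕ)
    · have hV0 : V = 0 := by
        rw [hV, if_neg]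
        rw [Finset.mem_Icc]
        omega
      have hAb : |A| ≤ Real.exp 1 * Real.sqrt (Real.exp 1) := by
        rw [hA, if_pos hj, mul_one]
        have h1 := vbound (-1 : ℝ) (Cmap d 1 x) (Cmap d 1 x)
        rw [neg_neg, hPsineg, zero_mul, sub_zero] at h1
        have h2 : -Psi 1 * phi' (Cmap d 1 x) = -(Psi 1 * phi' (Cmap d 1 x)) := by ring
        rw [h2]
        exact h1
      rw [hV0, abs_zero]
      linarith
    · have hA0 : A = 0 := by rw [hA, if_neg hj, mul_zero]
      have hVb : |V| ≤ Real.exp 1 * Real.sqrt (Real.exp 1) := by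
        rw [hV]
        split
        · exact vbound _ _ _
        · simpa using hS2
      rw [hA0, abs_zero]
      linarith
  have htri : |A + U + V| ≤ |A| + |U| + |V| := by
    calc |A + U + V| ≤ |A + U| + |V| := abs_add_le _ _
      _ ≤ |A| + |U| + |V| := by linarith [abs_add_le A U]
  have := numeric_bound
  linarith
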